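/- Let $\mathcal{C}$ be an abelian category with enough injectives and $X$ an exact, locally nilpotent endofunctor preserving injectives. For every object $\mathsf{M} \in \mathcal{C}^{T(X)}$, the morphism $p_{\mathsf{M}}\colon \operatorname{Mo}\mathsf{M} \to \mathsf{M}$ obtained by pushing out the canonical sequence $0 \to f_!X(M) \to f_!(M) \to \mathsf{M} \to 0$ along $f_!(e)$, where $e\colon X(M) \to J$ restricts to a monomorphism $\ker h_{\mathsf{M}} \hookrightarrow J$ with $J$ injective, is a right $\operatorname{Mono}(X)$-approximation of $\mathsf{M}$: $\operatorname{Mo}\mathsf{M} \in \operatorname{Mono}(X)$ and every morphism from an object of $\operatorname{Mono}(X)$ to $\mathsf{M}$ factors through $p_{\mathsf{M}}$. In particular, $\operatorname{Mono}(X)$ is contravariantly finite in $\mathcal{C}^{T(X)}$. -/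

import Mathlib

open CategoryTheory Limits

universe v u

variable {C : Type u} [Category.{v} C]

/-- The power `X^n` of an endofunctor, with `X^(n+1) = X^n ⋙ X`. -/
def fpow (X : C ⥤ C) : ℕ → (C ⥤ C)
  | 0 => 𝟭 C
  | n + 1 => fpow X n ⋙ X

/-- `X` is locally nilpotent if every object is annihilated by some power of `X`. -/
def LocallyNilpotent (X : C ⥤ C) : Prop :=
  ∀ M : C, ∃ n : ℕ, IsZero ((fpow X n).obj M)

/-- The category `(X ⇓ Id)` of `X`-modules, identified with the Eilenberg–Moore category
of the free monad on `X`. -/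
structure XMod (X : C ⥤ C) : Type max u v where
  carrier : C
  str : X.obj carrier ⟶ carrier

/-- Morphisms of `X`-modules. -/
@[ext]
structure XModHom {X : C ⥤ C} (M N : XMod X) : Type v where
  hom : M.carrier ⟶ N.carrier
  comm : M.str ≫ hom = X.map hom ≫ N.str

instance (X : C ⥤ C) : Category (XMod X) where
  Hom := XModHom
  id M := ⟨𝟙 M.carrier, by simp⟩
  comp f g := ⟨f.hom ≫ g.hom, by
    rw [← Category.assoc, f.comm, Category.assoc, g.comm, ← Category.assoc, ← Functor.map_comp]⟩
  id_comp f := by apply XModHom.ext; simp [CategoryStruct.id, CategoryStruct.comp]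
  comp_id f := by apply XModHom.ext; simp [CategoryStruct.id, CategoryStruct.comp]
  assoc f g h := by apply XModHom.ext; simp [CategoryStruct.comp]

@[simp] lemma XMod.id_hom {X : C ⥤ C} (M : XMod X) : (𝟙 M : XModHom M M).hom = 𝟙 M.carrier := rfl
@[simp] lemma XMod.comp_hom {X : C ⥤ C} {M N P : XMod X} (f : M ⟶ N) (g : N ⟶ P) :
    (f ≫ g).hom = f.hom ≫ g.hom := rfl

/-- `F` is the free `X`-module `f₁(N)` on `N`, encoded via the universal
property of the free–forgetful adjunction `f₁ ⊣ f⋆`. -/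
structure IsFreeXModOn (X : C ⥤ C) (F : XMod X) (N : C) where
  unit : N ⟶ F.carrier
  lift : ∀ (P : XMod X), (N ⟶ P.carrier) → (F ⟶ P)
  fac : ∀ (P : XMod X) (g : N ⟶ P.carrier), unit ≫ (lift P g).hom = g
  uniq : ∀ (P : XMod X) (g : N ⟶ P.carrier) (k : F ⟶ P), unit ≫ k.hom = g → k = lift P g

variable [Abelian C] {X : C ⥤ C} [X.Additive]

instance {M N : XMod X} : Zero (XModHom M N) := ⟨⟨0, by simp⟩⟩
instance {M N : XMod X} : Add (XModHom M N) :=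
  ⟨fun f g => ⟨f.hom + g.hom, by
    simp [Preadditive.comp_add, Preadditive.add_comp, f.comm, g.comm]⟩⟩
instance {M N : XMod X} : Neg (XModHom M N) :=
  ⟨fun f => ⟨-f.hom, by simp [Preadditive.comp_neg, Preadditive.neg_comp, f.comm]⟩⟩

instance {M N : XMod X} : AddCommGroup (XModHom M N) where
  add_assoc f g h := by apply XModHom.ext; exact add_assoc _ _ _
  zero_add f := by apply XModHom.ext; exact zero_add _
  add_zero f := by apply XModHom.ext; exact add_zero _
  add_comm f g := by apply XModHom.ext; exact add_comm _ _
  neg_add_cancel f := by apply XModHom.ext; exact neg_add_cancel _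
  nsmul := nsmulRec
  zsmul := zsmulRec

instance : Preadditive (XMod X) where
  homGroup M N := inferInstanceAs (AddCommGroup (XModHom M N))
  add_comp M N P f g h := by apply XModHom.ext; exact Preadditive.add_comp _ _ _ _ _ _
  comp_add M N P f g h := by apply XModHom.ext; exact Preadditive.comp_add _ _ _ _ _ _

@[simp] lemma XMod.zero_hom (M N : XMod X) : (0 : M ⟶ N).hom = 0 := rfl
@[simp] lemma XMod.add_hom {M N : XMod X} (f g : M ⟶ N) : (f + g).hom = f.hom + g.hom := rfl

section Aux
set_option linter.unusedSectionVars false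

lemma XMod.hom_ext' {X : C ⥤ C} {M N : XMod X} {f g : M ⟶ N} (h : f.hom = g.hom) :
    f = g := XModHom.ext h

@[simp] lemma XMod.neg_hom {X : C ⥤ C} [Abelian C] [X.Additive] {M N : XMod X} (f : M ⟶ N) :
    (-f).hom = -f.hom := rfl

variable [Abelian C] {X : C ⥤ C} [X.Additive]

lemma xmap_biprod_ext {A B Y : C} {f g : X.obj (A ⊞ B) ⟶ Y}
    (h1 : X.map biprod.inl ≫ f = X.map biprod.inl ≫ g)
    (h2 : X.map biprod.inr ≫ f = X.map biprod.inr ≫ g) : f = g := by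
  have htot : X.map (biprod.fst ≫ biprod.inl) + X.map (biprod.snd ≫ biprod.inr)
      = 𝟙 (X.obj (A ⊞ B)) := by
    rw [← X.map_add, biprod.total, X.map_id]
  calc f = (X.map (biprod.fst ≫ biprod.inl) + X.map (biprod.snd ≫ biprod.inr)) ≫ f := by
        rw [htot, Category.id_comp]
    _ = X.map biprod.fst ≫ (X.map biprod.inl ≫ f)
        + X.map biprod.snd ≫ (X.map biprod.inr ≫ f) := by
        simp [X.map_comp, Preadditive.add_comp, Category.assoc]
    _ = X.map biprod.fst ≫ (X.map biprod.inl ≫ g)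
        + X.map biprod.snd ≫ (X.map biprod.inr ≫ g) := by rw [h1, h2]
    _ = (X.map (biprod.fst ≫ biprod.inl) + X.map (biprod.snd ≫ biprod.inr)) ≫ g := by
        simp [X.map_comp, Preadditive.add_comp, Category.assoc]
    _ = g := by rw [htot, Category.id_comp]

lemma free_desc_isIso {F : XMod X} {N : C} (hF : IsFreeXModOn X F N) :
    IsIso (biprod.desc hF.unit F.str) := by
  set Λ := biprod.desc hF.unit F.str with hΛ
  let G : XMod X := ⟨N ⊞ X.obj F.carrier, X.map Λ ≫ biprod.inr⟩
  have hGΛ : (X.map Λ ≫ biprod.inr) ≫ Λ = X.map Λ ≫ F.str := by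
    simp [hΛ, Category.assoc]
  let φ : G ⟶ F := ⟨Λ, hGΛ⟩
  let ψ : F ⟶ G := hF.lift G biprod.inl
  have hfac : hF.unit ≫ ψ.hom = biprod.inl := hF.fac G biprod.inl
  have h1 : ψ ≫ φ = 𝟙 F := by
    have e1 := hF.uniq F hF.unit (ψ ≫ φ) (by
      show hF.unit ≫ ψ.hom ≫ Λ = hF.unit
      rw [← Category.assoc, hfac]; simp [hΛ])
    have e2 := hF.uniq F hF.unit (𝟙 F) (by simp)
    rw [e1, e2]
  have hψΛ : ψ.hom ≫ Λ = 𝟙 F.carrier := by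
    have := congrArg XModHom.hom h1
    simpa using this
  have hΛψ : Λ ≫ ψ.hom = 𝟙 (N ⊞ X.obj F.carrier) := by
    apply biprod.hom_ext'
    · rw [← Category.assoc]; simp [hΛ, hfac]
    · rw [← Category.assoc]
      have : biprod.inr ≫ Λ = F.str := by simp [hΛ]
      rw [this, ψ.comm]
      show X.map ψ.hom ≫ X.map Λ ≫ biprod.inr = _
      rw [← Category.assoc, ← X.map_comp, hψΛ, X.map_id, Category.id_comp, Category.comp_id]
  exact ⟨ψ.hom, hΛψ, hψΛ⟩

lemma fpow_obj_comm (n : ℕ) (A : C) :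
    (fpow X n).obj (X.obj A) = X.obj ((fpow X n).obj A) := by
  induction n with
  | zero => rfl
  | succ n ih =>
    show X.obj ((fpow X n).obj (X.obj A)) = _
    rw [ih]; rfl

lemma solvable (hXinj : ∀ I : C, Injective I → Injective (X.obj I)) :
    ∀ (m : ℕ) (K : C) (κ : X.obj K ⟶ K) (A : C), Injective A →
      ∀ (ι : A ⟶ K) (π : K ⟶ A) (σ : K ⟶ X.obj K),
      π ≫ ι + σ ≫ κ = 𝟙 K →
      IsZero ((fpow X m).obj K) →
      ∀ (N : XMod X), Mono N.str → ∀ (γ : X.obj N.carrier ⟶ K),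
      ∃ u : N.carrier ⟶ K, X.map u ≫ κ - N.str ≫ u = γ := by
  intro m
  induction m with
  | zero =>
    intro K κ A hA ι π σ hid hz N hN γ
    exact ⟨0, by rw [hz.eq_of_tgt γ 0]; simp; exact hz.eq_of_tgt _ _⟩
  | succ m ih =>
    intro K κ A hA ι π σ hid hz N hN γ
    haveI := hA
    haveI := hN
    set a : N.carrier ⟶ A := Injective.factorThru (-(γ ≫ π)) N.str with ha
    have haf : N.str ≫ a = -(γ ≫ π) := Injective.comp_factorThru _ _
    have hz' : IsZero ((fpow X m).obj (X.obj K)) := by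
      rw [fpow_obj_comm]; exact hz
    obtain ⟨v, hv⟩ := ih (X.obj K) (X.map κ) (X.obj A) (hXinj A hA) (X.map ι) (X.map π)
      (X.map σ)
      (by rw [← X.map_comp, ← X.map_comp, ← X.map_add, hid, X.map_id]) hz' N hN
      (γ ≫ σ - X.map a ≫ X.map ι)
    refine ⟨a ≫ ι + v ≫ κ, ?_⟩
    have F1 : X.map v ≫ X.map κ ≫ κ
        = γ ≫ σ ≫ κ - X.map a ≫ X.map ι ≫ κ + N.str ≫ v ≫ κ := by
      have h := congrArg (fun t => t ≫ κ) hv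
      simp only [Preadditive.sub_comp, Category.assoc] at h
      rw [sub_eq_iff_eq_add] at h
      rw [h]
    have F2 : N.str ≫ a ≫ ι = -(γ ≫ π ≫ ι) := by
      rw [← Category.assoc, haf]
      simp [Preadditive.neg_comp, Category.assoc]
    have F3 : γ ≫ π ≫ ι + γ ≫ σ ≫ κ = γ := by
      rw [← Preadditive.comp_add, hid, Category.comp_id]
    rw [X.map_add, X.map_comp, X.map_comp]
    simp only [Preadditive.add_comp, Preadditive.comp_add, Category.assoc]
    rw [F1, F2]
    conv_rhs => rw [← F3]
    abel

end Aux
section Phi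
set_option linter.unusedSectionVars false
variable [Abelian C] {X : C ⥤ C} [X.Additive]

lemma phi_isIso (M : XMod X) {FM FXM : XMod X}
    (hFM : IsFreeXModOn X FM M.carrier) (hFXM : IsFreeXModOn X FXM (X.obj M.carrier))
    (d : FXM ⟶ FM)
    (hd : hFXM.unit ≫ d.hom = X.map hFM.unit ≫ FM.str - M.str ≫ hFM.unit) :
    IsIso (biprod.desc hFM.unit d.hom) := by
  set Φ := biprod.desc hFM.unit d.hom with hΦdef
  have einl : biprod.inl ≫ Φ = hFM.unit := by rw [hΦdef]; simp
  have einr : biprod.inr ≫ Φ = d.hom := by rw [hΦdef]; simp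
  set Wstr : X.obj (M.carrier ⊞ FXM.carrier) ⟶ M.carrier ⊞ FXM.carrier :=
    X.map biprod.fst ≫ biprod.lift M.str hFXM.unit
      + X.map biprod.snd ≫ (FXM.str ≫ biprod.inr) with hWdef
  have hWinl : X.map biprod.inl ≫ Wstr = biprod.lift M.str hFXM.unit := by
    rw [hWdef, Preadditive.comp_add, ← Category.assoc, ← Category.assoc,
      ← X.map_comp, ← X.map_comp]
    simp
  have hWinr : X.map biprod.inr ≫ Wstr = FXM.str ≫ biprod.inr := by
    rw [hWdef, Preadditive.comp_add, ← Category.assoc, ← Category.assoc,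
      ← X.map_comp, ← X.map_comp]
    simp
  have hcomm : Wstr ≫ Φ = X.map Φ ≫ FM.str := by
    apply xmap_biprod_ext
    · rw [← Category.assoc, hWinl, ← Category.assoc, ← X.map_comp, einl]
      rw [hΦdef, biprod.lift_desc, hd]
      abel
    · rw [← Category.assoc, hWinr, ← Category.assoc, ← X.map_comp, einr,
        Category.assoc, einr, d.comm]
  let W : XMod X := ⟨M.carrier ⊞ FXM.carrier, Wstr⟩
  let Φm : W ⟶ FM := ⟨Φ, hcomm⟩
  let ψ : FM ⟶ W := hFM.lift W biprod.inl
  have hfac : hFM.unit ≫ ψ.hom = biprod.inl := hFM.fac W biprod.inl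
  have hψcomm : FM.str ≫ ψ.hom = X.map ψ.hom ≫ Wstr := ψ.comm
  have h1 : ψ ≫ Φm = 𝟙 FM := by
    have e1 := hFM.uniq FM hFM.unit (ψ ≫ Φm) (by
      show hFM.unit ≫ ψ.hom ≫ Φ = hFM.unit
      rw [← Category.assoc, hfac, einl])
    have e2 := hFM.uniq FM hFM.unit (𝟙 FM) (by simp)
    rw [e1, e2]
  have hψΦ : ψ.hom ≫ Φ = 𝟙 FM.carrier := by simpa using congrArg XModHom.hom h1
  have hlift : biprod.lift M.str hFXM.unit - M.str ≫ biprod.inl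
      = hFXM.unit ≫ biprod.inr := by
    apply biprod.hom_ext <;> simp
  let ι2 : FXM ⟶ W := ⟨biprod.inr, hWinr.symm⟩
  have hdψ : d ≫ ψ = ι2 := by
    have e1 := hFXM.uniq W (hFXM.unit ≫ biprod.inr) (d ≫ ψ) (by
      show hFXM.unit ≫ d.hom ≫ ψ.hom = hFXM.unit ≫ biprod.inr
      rw [← Category.assoc, hd, Preadditive.sub_comp, Category.assoc, Category.assoc,
        hψcomm, hfac, ← Category.assoc (X.map hFM.unit), ← X.map_comp, hfac, hWinl, hlift])
    have e2 := hFXM.uniq W (hFXM.unit ≫ biprod.inr) ι2 rfl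
    rw [e1, e2]
  have hdψh : d.hom ≫ ψ.hom = biprod.inr := by simpa using congrArg XModHom.hom hdψ
  have hΦψ : Φ ≫ ψ.hom = 𝟙 (M.carrier ⊞ FXM.carrier) := by
    apply biprod.hom_ext'
    · rw [← Category.assoc, einl, hfac, Category.comp_id]
    · rw [← Category.assoc, einr, hdψh, Category.comp_id]
  exact ⟨ψ.hom, hΦψ, hψΦ⟩

end Phi
/-- Let `C` be abelian with enough injectives and `X` exact, locally
nilpotent and preserving injectives. For `M` in the Eilenberg–Moore category of the free
monad, choose an injective `J` and `e : X(M) ⟶ J` restricting to a monomorphism on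
`ker h_M`, and form `Mo M` as the pushout of `0 ⟶ f₁X(M) ⟶ f₁(M) ⟶ M ⟶ 0` along
`f₁(e)`. Then the induced map `p : Mo M ⟶ M` is a right `Mono(X)`-approximation:
`Mo M ∈ Mono(X)` and every morphism from an object of `Mono(X)` to `M` factors through
`p`. In particular `Mono(X)` is contravariantly finite. -/
theorem mo_is_right_monoX_approximation
    [EnoughInjectives C]
    [PreservesFiniteLimits X] [PreservesFiniteColimits X]
    (hX : LocallyNilpotent X)
    (hXinj : ∀ I : C, Injective I → Injective (X.obj I))
    (M : XMod X) (J : C) (hJ : Injective J) (e : X.obj M.carrier ⟶ J)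
    (he : Mono (kernel.ι M.str ≫ e))
    (FM FXM FJ : XMod X)
    (hFM : IsFreeXModOn X FM M.carrier) (hFXM : IsFreeXModOn X FXM (X.obj M.carrier))
    (hFJ : IsFreeXModOn X FJ J)
    (d : FXM ⟶ FM) (hd : hFXM.unit ≫ d.hom = X.map hFM.unit ≫ FM.str - M.str ≫ hFM.unit)
    (fe : FXM ⟶ FJ) (hfe : hFXM.unit ≫ fe.hom = e ≫ hFJ.unit)
    (ε : FM ⟶ M) (hε : hFM.unit ≫ ε.hom = 𝟙 M.carrier)
    (Mo : XMod X) (s : FJ ⟶ Mo) (r : FM ⟶ Mo) (hpo : IsPushout fe d s r)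
    (p : Mo ⟶ M) (hp1 : r ≫ p = ε) (hp2 : s ≫ p = 0) :
    Mono Mo.str ∧
      ∀ (N : XMod X), Mono N.str → ∀ f : N ⟶ M, ∃ f' : N ⟶ Mo, f' ≫ p = f := by

  -- split structure of the free module FJ
  have hΛiso : IsIso (biprod.desc hFJ.unit FJ.str) := free_desc_isIso hFJ
  set Λ := biprod.desc hFJ.unit FJ.str with hΛdef
  have hunitΛ : hFJ.unit ≫ inv Λ = biprod.inl := by
    rw [IsIso.comp_inv_eq]; rw [hΛdef]; simp
  have hstrΛ : FJ.str ≫ inv Λ = biprod.inr := by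
    rw [IsIso.comp_inv_eq]; rw [hΛdef]; simp
  set πJ : FJ.carrier ⟶ J := inv Λ ≫ biprod.fst with hπdef
  set σJ : FJ.carrier ⟶ X.obj FJ.carrier := inv Λ ≫ biprod.snd with hσdef
  have hπunit : hFJ.unit ≫ πJ = 𝟙 J := by
    rw [hπdef, ← Category.assoc, hunitΛ]; simp
  have hπstr : FJ.str ≫ πJ = 0 := by
    rw [hπdef, ← Category.assoc, hstrΛ]; simp
  have hσstr : FJ.str ≫ σJ = 𝟙 (X.obj FJ.carrier) := by
    rw [hσdef, ← Category.assoc, hstrΛ]; simp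
  have hid : πJ ≫ hFJ.unit + σJ ≫ FJ.str = 𝟙 FJ.carrier := by
    have hΛeq : biprod.fst ≫ hFJ.unit + biprod.snd ≫ FJ.str = Λ := by
      apply biprod.hom_ext' <;> rw [hΛdef] <;> simp
    rw [hπdef, hσdef, Category.assoc, Category.assoc, ← Preadditive.comp_add, hΛeq,
      IsIso.inv_hom_id]
  obtain ⟨m, hm⟩ := hX FJ.carrier
  have hsq : fe.hom ≫ s.hom = d.hom ≫ r.hom := by
    have := congrArg XModHom.hom hpo.w
    simpa using this
  have hηstr : X.map hFM.unit ≫ FM.str = hFXM.unit ≫ d.hom + M.str ≫ hFM.unit := by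
    rw [hd]; abel
  constructor
  · -- `Mo` lies in `Mono(X)`
    have hΦiso : IsIso (biprod.desc hFM.unit d.hom) := phi_isIso M hFM hFXM d hd
    set Φ := biprod.desc hFM.unit d.hom with hΦdef
    have einlΦ : biprod.inl ≫ Φ = hFM.unit := by rw [hΦdef]; simp
    have einrΦ : biprod.inr ≫ Φ = d.hom := by rw [hΦdef]; simp
    have hunitΦ : hFM.unit ≫ inv Φ = biprod.inl := by rw [IsIso.comp_inv_eq, einlΦ]
    have hdΦ : d.hom ≫ inv Φ = biprod.inr := by rw [IsIso.comp_inv_eq, einrΦ]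
    set ζ : X.obj M.carrier ⟶ FJ.carrier ⊞ M.carrier :=
      e ≫ hFJ.unit ≫ biprod.inl + M.str ≫ biprod.inr with hζdef
    set Pstr : X.obj (FJ.carrier ⊞ M.carrier) ⟶ FJ.carrier ⊞ M.carrier :=
      X.map biprod.fst ≫ (FJ.str ≫ biprod.inl) + X.map biprod.snd ≫ ζ with hPdef
    have hPinl : X.map biprod.inl ≫ Pstr = FJ.str ≫ biprod.inl := by
      rw [hPdef, Preadditive.comp_add, ← Category.assoc (X.map biprod.inl) (X.map biprod.fst),
        ← X.map_comp, ← Category.assoc (X.map biprod.inl) (X.map biprod.snd), ← X.map_comp]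
      simp
    have hPinr : X.map biprod.inr ≫ Pstr = ζ := by
      rw [hPdef, Preadditive.comp_add, ← Category.assoc (X.map biprod.inr) (X.map biprod.fst),
        ← X.map_comp, ← Category.assoc (X.map biprod.inr) (X.map biprod.snd), ← X.map_comp]
      simp
    let P : XMod X := ⟨FJ.carrier ⊞ M.carrier, Pstr⟩
    let inl₀ : FJ ⟶ P := ⟨biprod.inl, hPinl.symm⟩
    set ρ : FM.carrier ⟶ FJ.carrier ⊞ M.carrier :=
      inv Φ ≫ biprod.desc biprod.inr (fe.hom ≫ biprod.inl) with hρdef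
    have hηρ : hFM.unit ≫ ρ = biprod.inr := by
      rw [hρdef, ← Category.assoc, hunitΦ]; simp
    have hdρ : d.hom ≫ ρ = fe.hom ≫ biprod.inl := by
      rw [hρdef, ← Category.assoc, hdΦ]; simp
    have hfe' := reassoc_of% hfe
    have hfec := reassoc_of% fe.comm
    have hρcomm : FM.str ≫ ρ = X.map ρ ≫ Pstr := by
      have hcan : IsIso (X.map Φ) := inferInstance
      rw [← cancel_epi (X.map Φ), ← Category.assoc (X.map Φ) (X.map ρ) Pstr, ← X.map_comp]
      have hΦρ : Φ ≫ ρ = biprod.desc biprod.inr (fe.hom ≫ biprod.inl) := by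
        rw [hρdef, ← Category.assoc, IsIso.hom_inv_id, Category.id_comp]
      rw [hΦρ]
      apply xmap_biprod_ext
      · calc X.map biprod.inl ≫ X.map Φ ≫ FM.str ≫ ρ
            = X.map hFM.unit ≫ FM.str ≫ ρ := by
              rw [← Category.assoc (X.map biprod.inl) (X.map Φ), ← X.map_comp, einlΦ]
          _ = (hFXM.unit ≫ d.hom + M.str ≫ hFM.unit) ≫ ρ := by
              rw [← Category.assoc (X.map hFM.unit) FM.str, hηstr]
          _ = hFXM.unit ≫ d.hom ≫ ρ + M.str ≫ hFM.unit ≫ ρ := by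
              simp only [Preadditive.add_comp, Category.assoc]
          _ = ζ := by rw [hdρ, hηρ, hfe', hζdef]
          _ = X.map biprod.inl ≫ X.map (biprod.desc biprod.inr (fe.hom ≫ biprod.inl)) ≫ Pstr := by
              rw [← Category.assoc, ← X.map_comp, biprod.inl_desc, hPinr]
      · calc X.map biprod.inr ≫ X.map Φ ≫ FM.str ≫ ρ
            = X.map d.hom ≫ FM.str ≫ ρ := by
              rw [← Category.assoc (X.map biprod.inr) (X.map Φ), ← X.map_comp, einrΦ]
          _ = FXM.str ≫ d.hom ≫ ρ := by
              rw [← Category.assoc (X.map d.hom) FM.str, ← d.comm, Category.assoc]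
          _ = FXM.str ≫ fe.hom ≫ biprod.inl := by rw [hdρ]
          _ = X.map fe.hom ≫ FJ.str ≫ biprod.inl := by rw [hfec]
          _ = X.map biprod.inr ≫ X.map (biprod.desc biprod.inr (fe.hom ≫ biprod.inl)) ≫ Pstr := by
              rw [← Category.assoc (X.map biprod.inr)
                  (X.map (biprod.desc biprod.inr (fe.hom ≫ biprod.inl))), ← X.map_comp,
                biprod.inr_desc, X.map_comp, Category.assoc, hPinl]
    let inr₀ : FM ⟶ P := ⟨ρ, hρcomm⟩
    have hsq2 : fe ≫ inl₀ = d ≫ inr₀ := XMod.hom_ext' (by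
      show fe.hom ≫ biprod.inl = d.hom ≫ ρ
      rw [hdρ])
    let α : Mo ⟶ P := hpo.desc inl₀ inr₀ hsq2
    have hsα : s ≫ α = inl₀ := hpo.inl_desc inl₀ inr₀ hsq2
    have hrα : r ≫ α = inr₀ := hpo.inr_desc inl₀ inr₀ hsq2
    have hsαh : s.hom ≫ α.hom = biprod.inl := by simpa using congrArg XModHom.hom hsα
    have hrαh : r.hom ≫ α.hom = ρ := by simpa using congrArg XModHom.hom hrα
    have hβcomm : Pstr ≫ biprod.desc s.hom (hFM.unit ≫ r.hom)
        = X.map (biprod.desc s.hom (hFM.unit ≫ r.hom)) ≫ Mo.str := by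
      apply xmap_biprod_ext
      · rw [← Category.assoc, hPinl, Category.assoc, biprod.inl_desc,
          ← Category.assoc, ← X.map_comp, biprod.inl_desc, s.comm]
      · rw [← Category.assoc, hPinr, ← Category.assoc, ← X.map_comp, biprod.inr_desc]
        calc ζ ≫ biprod.desc s.hom (hFM.unit ≫ r.hom)
            = e ≫ hFJ.unit ≫ s.hom + M.str ≫ hFM.unit ≫ r.hom := by
              rw [hζdef]
              simp only [Preadditive.add_comp, Category.assoc, biprod.inl_desc,
                biprod.inr_desc]
          _ = hFXM.unit ≫ d.hom ≫ r.hom + M.str ≫ hFM.unit ≫ r.hom := by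
              rw [← hfe', hsq]
          _ = (hFXM.unit ≫ d.hom + M.str ≫ hFM.unit) ≫ r.hom := by
              simp only [Preadditive.add_comp, Category.assoc]
          _ = X.map hFM.unit ≫ FM.str ≫ r.hom := by
              rw [← hηstr, Category.assoc]
          _ = X.map (hFM.unit ≫ r.hom) ≫ Mo.str := by
              rw [r.comm, X.map_comp, Category.assoc]
    let β : P ⟶ Mo := ⟨biprod.desc s.hom (hFM.unit ≫ r.hom), hβcomm⟩
    have hρβ : ρ ≫ β.hom = r.hom := by
      have hdd : biprod.desc biprod.inr (fe.hom ≫ biprod.inl)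
          ≫ biprod.desc s.hom (hFM.unit ≫ r.hom) = Φ ≫ r.hom := by
        apply biprod.hom_ext'
        · rw [← Category.assoc, biprod.inl_desc, biprod.inr_desc, ← Category.assoc, einlΦ]
        · rw [← Category.assoc, biprod.inr_desc, Category.assoc, biprod.inl_desc,
            hsq, ← Category.assoc, einrΦ]
      show ρ ≫ β.hom = r.hom
      rw [hρdef, Category.assoc, hdd, ← Category.assoc, IsIso.inv_hom_id, Category.id_comp]
    have hαβ : α ≫ β = 𝟙 Mo := by
      apply hpo.hom_ext
      · apply XMod.hom_ext'
        simp only [XMod.comp_hom, XMod.id_hom, Category.comp_id]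
        rw [← Category.assoc, hsαh]
        exact biprod.inl_desc _ _
      · apply XMod.hom_ext'
        simp only [XMod.comp_hom, XMod.id_hom, Category.comp_id]
        rw [← Category.assoc, hrαh, hρβ]
    have hβα : β.hom ≫ α.hom = 𝟙 (FJ.carrier ⊞ M.carrier) := by
      apply biprod.hom_ext'
      · rw [← Category.assoc, biprod.inl_desc, hsαh, Category.comp_id]
      · rw [← Category.assoc, biprod.inr_desc, Category.assoc, hrαh, hηρ, Category.comp_id]
    have hαiso : IsIso α.hom := ⟨β.hom, by simpa using congrArg XModHom.hom hαβ, hβα⟩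
    have hmono : Mono Pstr := by
      rw [Preadditive.mono_iff_cancel_zero]
      intro Z g hg
      set g₁ := g ≫ X.map biprod.fst with hg1
      set g₂ := g ≫ X.map biprod.snd with hg2
      have hexp : g ≫ Pstr = (g₁ ≫ FJ.str + g₂ ≫ e ≫ hFJ.unit) ≫ biprod.inl
          + (g₂ ≫ M.str) ≫ biprod.inr := by
        rw [hPdef, Preadditive.comp_add, ← Category.assoc g (X.map biprod.fst),
          ← Category.assoc g (X.map biprod.snd), ← hg1, ← hg2, hζdef]
        simp only [Preadditive.add_comp, Preadditive.comp_add, Category.assoc]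
        abel
      rw [hg] at hexp
      have h1 : g₁ ≫ FJ.str + g₂ ≫ e ≫ hFJ.unit = 0 := by
        have := congrArg (fun t => t ≫ biprod.fst) hexp
        simpa using this.symm
      have h2 : g₂ ≫ M.str = 0 := by
        have := congrArg (fun t => t ≫ biprod.snd) hexp
        simpa using this.symm
      have h3 : g₂ ≫ e = 0 := by
        have := congrArg (fun t => t ≫ πJ) h1
        simpa only [Preadditive.add_comp, Category.assoc, hπstr, hπunit, comp_zero,
          zero_comp, Category.comp_id, zero_add] using this
      have h4 : g₂ = 0 := by
        have hk : kernel.lift M.str g₂ h2 ≫ (kernel.ι M.str ≫ e) = 0 := by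
          rw [← Category.assoc, kernel.lift_ι, h3]
        have hz0 := (Preadditive.mono_iff_cancel_zero _).mp he _ _ hk
        rw [← kernel.lift_ι M.str g₂ h2, hz0, zero_comp]
      have h5 : g₁ = 0 := by
        have hfj : g₁ ≫ FJ.str = 0 := by
          rw [h4] at h1
          simpa using h1
        calc g₁ = g₁ ≫ FJ.str ≫ σJ := by rw [hσstr, Category.comp_id]
          _ = 0 := by rw [← Category.assoc, hfj, zero_comp]
      have hdecomp : g = g₁ ≫ X.map biprod.inl + g₂ ≫ X.map biprod.inr := by
        rw [hg1, hg2, Category.assoc, Category.assoc, ← X.map_comp, ← X.map_comp,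
          ← Preadditive.comp_add, ← X.map_add, biprod.total, X.map_id, Category.comp_id]
      rw [hdecomp, h4, h5, zero_comp, zero_comp, add_zero]
    have hcomm := α.comm
    haveI : IsIso (X.map α.hom) := inferInstance
    haveI hPm : Mono (X.map α.hom ≫ Pstr) := mono_comp _ _
    haveI : Mono (Mo.str ≫ α.hom) := by rw [hcomm]; exact hPm
    exact mono_of_mono Mo.str α.hom
  · -- right approximation property
    intro N hN f
    obtain ⟨w, hw⟩ := solvable hXinj m FJ.carrier FJ.str J hJ hFJ.unit πJ σJ hid hm N hN
      (-(X.map f.hom ≫ e ≫ hFJ.unit))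
    have hw' : N.str ≫ w = X.map w ≫ FJ.str + X.map f.hom ≫ e ≫ hFJ.unit := by
      rw [sub_eq_iff_eq_add] at hw
      rw [hw]; abel
    have hfc := reassoc_of% f.comm
    have hfe' := reassoc_of% hfe
    have E1 : X.map f.hom ≫ X.map hFM.unit ≫ X.map r.hom ≫ Mo.str
        = N.str ≫ f.hom ≫ hFM.unit ≫ r.hom + X.map f.hom ≫ e ≫ hFJ.unit ≫ s.hom := by
      calc X.map f.hom ≫ X.map hFM.unit ≫ X.map r.hom ≫ Mo.str
          = X.map f.hom ≫ X.map hFM.unit ≫ FM.str ≫ r.hom := by rw [← r.comm]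
        _ = X.map f.hom ≫ (hFXM.unit ≫ d.hom + M.str ≫ hFM.unit) ≫ r.hom := by
            rw [← Category.assoc (X.map hFM.unit), hηstr]
        _ = X.map f.hom ≫ hFXM.unit ≫ d.hom ≫ r.hom
            + X.map f.hom ≫ M.str ≫ hFM.unit ≫ r.hom := by
            simp only [Preadditive.add_comp, Preadditive.comp_add, Category.assoc]
        _ = X.map f.hom ≫ hFXM.unit ≫ fe.hom ≫ s.hom
            + N.str ≫ f.hom ≫ hFM.unit ≫ r.hom := by rw [← hsq, ← hfc]
        _ = X.map f.hom ≫ e ≫ hFJ.unit ≫ s.hom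
            + N.str ≫ f.hom ≫ hFM.unit ≫ r.hom := by rw [hfe']
        _ = N.str ≫ f.hom ≫ hFM.unit ≫ r.hom
            + X.map f.hom ≫ e ≫ hFJ.unit ≫ s.hom := by abel
    have E2 : X.map w ≫ X.map s.hom ≫ Mo.str = X.map w ≫ FJ.str ≫ s.hom := by
      rw [← s.comm]
    have hcommf : N.str ≫ (f.hom ≫ hFM.unit ≫ r.hom + w ≫ s.hom)
        = X.map (f.hom ≫ hFM.unit ≫ r.hom + w ≫ s.hom) ≫ Mo.str := by
      calc N.str ≫ (f.hom ≫ hFM.unit ≫ r.hom + w ≫ s.hom)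
          = N.str ≫ f.hom ≫ hFM.unit ≫ r.hom + N.str ≫ w ≫ s.hom := by
            rw [Preadditive.comp_add]
        _ = N.str ≫ f.hom ≫ hFM.unit ≫ r.hom
            + (X.map w ≫ FJ.str ≫ s.hom + X.map f.hom ≫ e ≫ hFJ.unit ≫ s.hom) := by
            rw [← Category.assoc N.str w, hw']
            simp only [Preadditive.add_comp, Category.assoc]
        _ = X.map f.hom ≫ X.map hFM.unit ≫ X.map r.hom ≫ Mo.str
            + X.map w ≫ X.map s.hom ≫ Mo.str := by rw [E1, E2]; abel
        _ = X.map (f.hom ≫ hFM.unit ≫ r.hom + w ≫ s.hom) ≫ Mo.str := by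
            rw [X.map_add]
            simp only [Functor.map_comp, Preadditive.add_comp, Category.assoc]
    refine ⟨⟨f.hom ≫ hFM.unit ≫ r.hom + w ≫ s.hom, hcommf⟩, ?_⟩
    apply XMod.hom_ext'
    have hr : r.hom ≫ p.hom = ε.hom := by simpa using congrArg XModHom.hom hp1
    have hs : s.hom ≫ p.hom = 0 := by simpa using congrArg XModHom.hom hp2
    show (f.hom ≫ hFM.unit ≫ r.hom + w ≫ s.hom) ≫ p.hom = f.hom
    simp only [Preadditive.add_comp, Category.assoc, hr, hs, comp_zero, add_zero]
    rw [hε, Category.comp_id]
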